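/- For b a positive integer and ℓ ≥ 0, let X_b = {0,1}^ℓ × {0,1,...,b} ⊆ ℤ^{ℓ+1}. The simplex P = { x ∈ ℝ^{ℓ+1} : x_k ≤ 1 + Σ_{i=k+1}^{ℓ+1} (b+1)^{-i} x_i for k ∈ {1,...,ℓ}, x_{ℓ+1} ≤ b, and x_1 + Σ_{i=2}^{ℓ+1} (b+1)^{-i} x_i ≥ 0 } satisfies P ∩ ℤ^{ℓ+1} = X_b. In particular, X_b admits a relaxation with ℓ + 2 facets. -/

import Mathlib

/-- the explicit simplex with `ℓ + 2` facets is a relaxation of the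
box `X_b = {0,1}^ℓ × {0,…,b}`. -/
theorem box_simplex_relaxation (ℓ : ℕ) (b : ℤ) (hb : 0 < b) (z : Fin (ℓ + 1) → ℤ) :
    ((∀ k : Fin (ℓ + 1), k.val < ℓ →
        (z k : ℝ) ≤ 1 + ∑ i : Fin (ℓ + 1),
          if k < i then (z i : ℝ) / ((b : ℝ) + 1) ^ (i.val + 1) else 0) ∧
      (z (Fin.last ℓ) : ℝ) ≤ (b : ℝ) ∧
      0 ≤ (z 0 : ℝ) + ∑ i : Fin (ℓ + 1),
        if 0 < i.val then (z i : ℝ) / ((b : ℝ) + 1) ^ (i.val + 1) else 0)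
    ↔ ((∀ i : Fin (ℓ + 1), i.val < ℓ → z i = 0 ∨ z i = 1) ∧
        0 ≤ z (Fin.last ℓ) ∧ z (Fin.last ℓ) ≤ b) := by
  have hb1 : (1:ℝ) ≤ (b:ℝ) := by exact_mod_cast hb
  set β : ℝ := (b:ℝ) + 1 with hβdef
  have hβ2 : (2:ℝ) ≤ β := by linarith
  have hβ0 : (0:ℝ) < β := by linarith
  have hβne : β ≠ 0 := ne_of_gt hβ0
  have hβn : ∀ n : ℕ, (0:ℝ) < β ^ n := fun n => pow_pos hβ0 n
  constructor
  · rintro ⟨h1, h2, h3⟩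
    -- setup
    set w : ℕ → ℝ := fun n => if h : n < ℓ + 1 then ((z ⟨n, h⟩ : ℤ) : ℝ) else 0 with hw
    have hwz : ∀ i : Fin (ℓ+1), w i.val = (z i : ℝ) := by
      intro i; simp only [hw]; rw [dif_pos i.isLt]
    set S : ℕ → ℝ := fun k => ∑ i ∈ Finset.Ico (k+1) (ℓ+1), w i / β ^ (i+1) with hS
    have hfilt : ∀ k n : ℕ, Finset.filter (fun i => k < i) (Finset.range n)
        = Finset.Ico (k+1) n := by
      intro k n; ext i; simp [Finset.mem_filter, Finset.mem_Ico]; omega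
    have hsum : ∀ k : Fin (ℓ+1),
        (∑ i : Fin (ℓ+1), if k < i then (z i : ℝ) / β ^ (i.val+1) else 0) = S k.val := by
      intro k
      have e1 : ∀ i : Fin (ℓ+1), (if k < i then (z i : ℝ) / β ^ (i.val+1) else 0)
          = (fun n => if k.val < n then w n / β ^ (n+1) else 0) i.val := by
        intro i
        simp only [Fin.lt_def, hwz]
      rw [Finset.sum_congr rfl (fun i _ => e1 i),
        Fin.sum_univ_eq_sum_range (fun n => if k.val < n then w n / β ^ (n+1) else 0),
        ← Finset.sum_filter, hfilt]
    -- rewrite constraint 1 in terms of w and S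
    have h1' : ∀ k : ℕ, (hk : k < ℓ) → w k ≤ 1 + S k := by
      intro k hk
      have hc := h1 ⟨k, by omega⟩ hk
      rw [hsum ⟨k, by omega⟩] at hc
      have := hwz ⟨k, by omega⟩
      simp only [Fin.val_mk] at hc this
      linarith
    -- key term bound
    have hwl : w ℓ ≤ β - 1 := by
      have e : w ℓ = (z (Fin.last ℓ) : ℝ) := hwz (Fin.last ℓ)
      rw [e]; simp only [hβdef]; linarith
    have key : ∀ k : ℕ, k ≤ ℓ → (∀ i, k < i → i < ℓ → w i ≤ 1) →
        S k ≤ (β^(k+1))⁻¹ - (β^(ℓ+1))⁻¹ := by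
      intro k hkℓ hk
      have hterm : ∀ i ∈ Finset.Ico (k+1) (ℓ+1),
          w i / β^(i+1) ≤ (β^i)⁻¹ - (β^(i+1))⁻¹ := by
        intro i hi
        rw [Finset.mem_Ico] at hi
        have hwi : w i ≤ β - 1 := by
          rcases lt_or_ge i ℓ with h | h
          · have := hk i hi.1 h; linarith
          · have : i = ℓ := by omega
            rw [this]; exact hwl
        have hd : w i / β^(i+1) ≤ (β-1)/β^(i+1) := by gcongr
        have he : (β-1)/β^(i+1) = (β^i)⁻¹ - (β^(i+1))⁻¹ := by
          rw [pow_succ]; field_simp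
        linarith
      calc S k ≤ ∑ i ∈ Finset.Ico (k+1) (ℓ+1), ((β^i)⁻¹ - (β^(i+1))⁻¹) :=
            Finset.sum_le_sum hterm
        _ = (β^(k+1))⁻¹ - (β^(ℓ+1))⁻¹ := by
            rw [Finset.sum_Ico_eq_sub (fun i => (β^i)⁻¹ - (β^(i+1))⁻¹)
                (by omega : k+1 ≤ ℓ+1),
              Finset.sum_range_sub' (fun i => (β^i)⁻¹),
              Finset.sum_range_sub' (fun i => (β^i)⁻¹)]
            ring
    -- upper bounds by downward induction
    have winz : ∀ (k : ℕ) (hk : k < ℓ + 1), w k = ((z ⟨k, hk⟩ : ℤ) : ℝ) := by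
      intro k hk
      have := hwz ⟨k, hk⟩
      simpa using this
    have ub : ∀ d k, k < ℓ → ℓ - k ≤ d → w k ≤ 1 := by
      intro d
      induction d with
      | zero => intro k hk hd; omega
      | succ d ih =>
        intro k hk hd
        have hSk : S k ≤ (β^(k+1))⁻¹ - (β^(ℓ+1))⁻¹ :=
          key k (by omega) (fun i hi1 hi2 => ih i hi2 (by omega))
        have hb1' : (β^(k+1))⁻¹ ≤ 1 := by
          rw [inv_le_one_iff₀]
          right
          exact one_le_pow₀ (by linarith)
        have hb2' : 0 < (β^(ℓ+1))⁻¹ := inv_pos.mpr (hβn _)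
        have hwk : w k < 2 := by
          have := h1' k hk
          linarith
        rw [winz k (by omega)] at hwk ⊢
        have : z ⟨k, by omega⟩ < 2 := by exact_mod_cast hwk
        have : z ⟨k, by omega⟩ ≤ 1 := by omega
        exact_mod_cast this
    have hw1 : ∀ k, k < ℓ → w k ≤ 1 := fun k hk => ub (ℓ - k) k hk le_rfl
    have hSb : ∀ k, k ≤ ℓ → S k ≤ (β^(k+1))⁻¹ - (β^(ℓ+1))⁻¹ :=
      fun k hkℓ => key k hkℓ (fun i _ h => hw1 i h)
    have hSlt : ∀ k, k ≤ ℓ → S k < (β^(k+1))⁻¹ := by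
      intro k hkℓ
      have := hSb k hkℓ
      have := inv_pos.mpr (hβn (ℓ+1))
      linarith
    have hinv1 : ∀ k : ℕ, (β^(k+1))⁻¹ ≤ 1 := by
      intro k
      rw [inv_le_one_iff₀]; right; exact one_le_pow₀ (by linarith)
    -- step relation
    have hstep : ∀ k, k < ℓ → S k = w (k+1) / β^(k+2) + S (k+1) := by
      intro k hk
      have e : S k = ∑ i ∈ Finset.Ico (k+1) (ℓ+1), w i / β ^ (i+1) := rfl
      rw [e, Finset.sum_eq_sum_Ico_succ_bot (by omega) (fun i => w i / β ^ (i+1))]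
    -- lower bounds by upward induction
    have low : ∀ k, (hk : k < ℓ) →
        (z ⟨k, by omega⟩ = 0 ∨ z ⟨k, by omega⟩ = 1) ∧ 0 ≤ S k := by
      intro k
      induction k with
      | zero =>
        intro hk
        have hs0 : (∑ i : Fin (ℓ+1), if 0 < i.val then (z i : ℝ) / β ^ (i.val+1) else 0)
            = S 0 := by
          have h := hsum 0
          simp only [Fin.val_zero] at h
          rw [← h]
          apply Finset.sum_congr rfl
          intro i _
          apply if_congr _ rfl rfl
          simp only [Fin.lt_def, Fin.val_zero]
        rw [hs0] at h3
        have e0 : w 0 = (z 0 : ℝ) := by simpa using hwz 0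
        have h3' : 0 ≤ w 0 + S 0 := by rw [e0]; exact h3
        have hS0 : S 0 < 1 := lt_of_lt_of_le (hSlt 0 (by omega)) (hinv1 0)
        have hSnn' : S 0 ≥ 0 → True := fun _ => trivial
        have e0' : w 0 = ((z ⟨0, by omega⟩ : ℤ) : ℝ) := winz 0 (by omega)
        have hlow : (0:ℤ) ≤ z ⟨0, by omega⟩ := by
          by_contra hcon
          push_neg at hcon
          have h' : z ⟨0, by omega⟩ ≤ -1 := by omega
          have h'' : ((z ⟨0, by omega⟩ : ℤ) : ℝ) ≤ -1 := by exact_mod_cast h'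
          rw [← e0'] at h''
          linarith
        have hup : z ⟨0, by omega⟩ ≤ 1 := by
          have := hw1 0 hk
          rw [e0'] at this
          exact_mod_cast this
        have hmem : z ⟨0, by omega⟩ = 0 ∨ z ⟨0, by omega⟩ = 1 := by omega
        refine ⟨hmem, ?_⟩
        have hc := h1' 0 hk
        rcases hmem with h0 | h0
        · have : w 0 = 0 := by rw [e0', h0]; norm_num
          linarith
        · have : w 0 = 1 := by rw [e0', h0]; norm_num
          linarith
      | succ k ih =>
        intro hk
        have hkk : k < ℓ := by omega
        obtain ⟨_, hSk⟩ := ih hkk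
        have hst := hstep k hkk
        have hS1 : S (k+1) < (β^(k+2))⁻¹ := hSlt (k+1) (by omega)
        have e1' : w (k+1) = ((z ⟨k+1, by omega⟩ : ℤ) : ℝ) := winz (k+1) (by omega)
        have hlow : (0:ℤ) ≤ z ⟨k+1, by omega⟩ := by
          by_contra hcon
          push_neg at hcon
          have h' : z ⟨k+1, by omega⟩ ≤ -1 := by omega
          have h'' : ((z ⟨k+1, by omega⟩ : ℤ) : ℝ) ≤ -1 := by exact_mod_cast h'
          rw [← e1'] at h''
          have hdiv : w (k+1) / β^(k+2) ≤ (-1) / β^(k+2) := by gcongr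
          have hneg : (-1:ℝ) / β^(k+2) = -(β^(k+2))⁻¹ := by
            rw [neg_div, one_div]
          linarith
        have hup : z ⟨k+1, by omega⟩ ≤ 1 := by
          have := hw1 (k+1) hk
          rw [e1'] at this
          exact_mod_cast this
        have hmem : z ⟨k+1, by omega⟩ = 0 ∨ z ⟨k+1, by omega⟩ = 1 := by omega
        refine ⟨hmem, ?_⟩
        have hc := h1' (k+1) hk
        rcases hmem with h0 | h0
        · have : w (k+1) = 0 := by rw [e1', h0]; norm_num
          rw [hst, this] at hSk
          simpa using hSk
        · have : w (k+1) = 1 := by rw [e1', h0]; norm_num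
          linarith
    -- conclude
    refine ⟨?_, ?_, ?_⟩
    · intro i hi
      have := (low i.val hi).1
      simpa [Fin.eta] using this
    · -- lower bound for the last coordinate
      rcases Nat.eq_zero_or_pos ℓ with h0 | h0
      · subst h0
        have hs0 : (∑ i : Fin 1, if 0 < i.val then (z i : ℝ) / β ^ (i.val+1) else 0) = 0 := by
          apply Finset.sum_eq_zero
          intro i _
          have hi := i.isLt
          have : i = 0 := by
            apply Fin.ext; simp
          subst this
          simp
        rw [hs0] at h3
        have h3' : (0:ℝ) ≤ (z 0 : ℝ) := by linarith
        have hz0 : (0:ℤ) ≤ z 0 := by exact_mod_cast h3'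
        have e : Fin.last 0 = (0 : Fin 1) := by
          apply Fin.ext; simp
        rw [e]; exact hz0
      · obtain ⟨m, rfl⟩ : ∃ m, ℓ = m + 1 := ⟨ℓ - 1, by omega⟩
        have hSm := (low m (by omega)).2
        have hSm' : S m = w (m+1) / β^(m+2) := by
          have e : S m = ∑ i ∈ Finset.Ico (m+1) (m+2), w i / β ^ (i+1) := rfl
          rw [e, Finset.sum_eq_sum_Ico_succ_bot (by omega) (fun i => w i / β ^ (i+1))]
          simp
        rw [hSm'] at hSm
        have hnum : 0 ≤ w (m+1) := by
          by_contra hcon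
          push_neg at hcon
          have : w (m+1) / β^(m+2) < 0 := div_neg_of_neg_of_pos hcon (hβn _)
          linarith
        rw [winz (m+1) (by omega)] at hnum
        have hfin : (0:ℤ) ≤ z ⟨m+1, by omega⟩ := by exact_mod_cast hnum
        exact hfin
    · exact_mod_cast h2
  · rintro ⟨h1, h2, h3⟩
    have hzn : ∀ i : Fin (ℓ+1), 0 ≤ (z i : ℝ) := by
      intro i
      rcases lt_or_ge i.val ℓ with h | h
      · rcases h1 i h with h0 | h0 <;> simp [h0]
      · have hi := i.isLt
        have : i = Fin.last ℓ := by
          apply Fin.ext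
          simp only [Fin.val_last]
          omega
        rw [this]; exact_mod_cast h2
    have hz1 : ∀ i : Fin (ℓ+1), i.val < ℓ → (z i : ℝ) ≤ 1 := by
      intro i h; rcases h1 i h with h0 | h0 <;> simp [h0]
    have hsnn : ∀ (p : Fin (ℓ+1) → Prop) (_ : DecidablePred p),
        0 ≤ ∑ i : Fin (ℓ+1), if p i then (z i : ℝ) / β ^ (i.val+1) else 0 := by
      intro p _
      apply Finset.sum_nonneg
      intro i _
      split
      · exact div_nonneg (hzn i) (hβn _).le
      · exact le_refl 0
    refine ⟨?_, ?_, ?_⟩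
    · intro k hk
      have ha := hsnn (fun i => k < i) (by infer_instance)
      have hbk := hz1 k hk
      linarith
    · exact_mod_cast h3
    · have ha := hsnn (fun i => 0 < i.val) (by infer_instance)
      have hbk := hzn 0
      linarith
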